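/- In the Heisenberg group H_3(ℝ) with the subFinsler metric d_3 induced by the ℓ¹ norm on the horizontal plane, if |xy|/2 ≤ |z| ≤ max{|x|,|y|}² − |xy|/2, then d_3(id,(x,y,z)) = max{|x|,|y|} + 2|z|/max{|x|,|y|}. -/

import Mathlib

/-- The subFinsler (Carnot–Carathéodory) distance from the identity in the
Heisenberg group `H₃(ℝ)`, in exponential coordinates `(x,y,z)` with `[X,Y] = Z`,
associated to the ℓ¹ norm `|a| + |b|` on horizontal vectors `aX + bY`.
A horizontal path is encoded by coordinate functions `x y z : ℝ → ℝ` with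
controls `u v` (the horizontal velocities), the constraint on `z` being
`z' = (x v - y u)/2`, and its length is `∫ (|u| + |v|)`. -/
noncomputable def d3 : ℝ × ℝ × ℝ → ℝ := fun p =>
  sInf { L : ℝ | ∃ x y z u v : ℝ → ℝ,
    x 0 = 0 ∧ y 0 = 0 ∧ z 0 = 0 ∧
    x 1 = p.1 ∧ y 1 = p.2.1 ∧ z 1 = p.2.2 ∧
    ContinuousOn u (Set.Icc 0 1) ∧ ContinuousOn v (Set.Icc 0 1) ∧
    (∀ t ∈ Set.Icc (0:ℝ) 1, HasDerivAt x (u t) t ∧ HasDerivAt y (v t) t ∧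
        HasDerivAt z ((x t * v t - y t * u t) / 2) t) ∧
    L = ∫ t in (0:ℝ)..1, (|u t| + |v t|) }

/-- Group law of `H₃(ℝ)` in exponential coordinates:
`(x,y,z)·(x',y',z') = (x+x', y+y', z+z'+(xy'-yx')/2)`. -/
noncomputable def hMul (p q : ℝ × ℝ × ℝ) : ℝ × ℝ × ℝ :=
  (p.1 + q.1, p.2.1 + q.2.1, p.2.2 + q.2.2 + (p.1 * q.2.1 - p.2.1 * q.1) / 2)

/-- Inverse in `H₃(ℝ)` in exponential coordinates. -/
noncomputable def hInv (p : ℝ × ℝ × ℝ) : ℝ × ℝ × ℝ := (-p.1, -p.2.1, -p.2.2)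

/-- The left-invariant subFinsler distance `d₃` on `H₃(ℝ)`. -/
noncomputable def d3dist (p q : ℝ × ℝ × ℝ) : ℝ := d3 (hMul (hInv p) q)


lemma core_alg (x y z Mx mx My my L₁ L₂ : ℝ)
    (hx : 0 < x) (hyx : |y| ≤ x) (hz : 0 ≤ z)
    (hreg : z ≤ x^2 - x * |y| / 2)
    (hMx : x ≤ Mx) (hmx : 0 ≤ mx) (hMy : 0 ≤ My) (hmy : 0 ≤ my)
    (hMy' : y ≤ My) (hmy' : -y ≤ my)
    (hL1 : 2*(Mx+mx) - x ≤ L₁) (hL2 : 2*(My+my) - |y| ≤ L₂)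
    (hM : 2*z + (My-my)/2*x - (Mx-mx)/2*y ≤ (Mx+mx)/2*L₂ + (My+my)/2*L₁) :
    x + 2*z/x ≤ L₁ + L₂ := by
  have key : x*x + 2*z ≤ x*(L₁ + L₂) := by
    rcases le_or_gt (My + my) x with hβ | hβ
    · rcases le_or_gt (Mx + mx) (2*x) with hα | hα
      · have hcorr : (Mx-mx)/2*y - (My-my)/2*x ≤ (Mx+mx)/2*|y| + (My+my)/2*x - x*|y| := by
          rcases abs_cases y with ⟨hy1, hy2⟩ | ⟨hy1, hy2⟩
          · nlinarith [abs_nonneg y]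
          · nlinarith [abs_nonneg y]
        nlinarith [mul_nonneg (sub_nonneg.2 hMx) (sub_nonneg.2 hβ),
          sub_nonneg.2 hL1, sub_nonneg.2 hL2, abs_nonneg y]
      · nlinarith [abs_nonneg y, sub_nonneg.2 hL2]
    · nlinarith [abs_nonneg y]
  have h2zx : 2*z/x ≤ L₁ + L₂ - x := by
    rw [div_le_iff₀ hx]; nlinarith
  linarith

/-- Reduction assuming `|y| ≤ |x|`. -/
lemma reduce1 (x y z Mx mx My my L₁ L₂ : ℝ)
    (hyx : |y| ≤ |x|)
    (hreg : |z| ≤ |x|^2 - |x*y|/2)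
    (hMx : max x 0 ≤ Mx) (hmx : max (-x) 0 ≤ mx)
    (hMy : max y 0 ≤ My) (hmy : max (-y) 0 ≤ my)
    (hL1 : 2*(Mx+mx) - |x| ≤ L₁) (hL2 : 2*(My+my) - |y| ≤ L₂)
    (hM : |2*z + (My-my)/2*x - (Mx-mx)/2*y| ≤ (Mx+mx)/2*L₂ + (My+my)/2*L₁) :
    |x| + 2*|z|/|x| ≤ L₁ + L₂ := by
  have hMx0 : x ≤ Mx := le_trans (le_max_left x 0) hMx
  have hMx0' : (0:ℝ) ≤ Mx := le_trans (le_max_right x 0) hMx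
  have hmx0 : -x ≤ mx := le_trans (le_max_left (-x) 0) hmx
  have hmx0' : (0:ℝ) ≤ mx := le_trans (le_max_right (-x) 0) hmx
  have hMy0 : y ≤ My := le_trans (le_max_left y 0) hMy
  have hMy0' : (0:ℝ) ≤ My := le_trans (le_max_right y 0) hMy
  have hmy0 : -y ≤ my := le_trans (le_max_left (-y) 0) hmy
  have hmy0' : (0:ℝ) ≤ my := le_trans (le_max_right (-y) 0) hmy
  rcases eq_or_lt_of_le (abs_nonneg x) with h0 | hxpos
  · have hx0 : |x| = 0 := h0.symm
    have hy0 : |y| = 0 := le_antisymm (hx0 ▸ hyx) (abs_nonneg y)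
    have hz0 : |z| = 0 := by
      have h1 : |x*y| = 0 := by rw [abs_mul, hx0]; ring
      nlinarith [abs_nonneg z, hreg, sq_nonneg (|x|)]
    rw [hx0, hz0]
    simp only [mul_zero, zero_div, add_zero, div_zero]
    rw [hx0] at hL1; rw [hy0] at hL2
    linarith
  · rw [abs_mul, sq_abs] at hreg
    have hMR := abs_le.1 hM
    rcases le_or_gt 0 x with hx | hx
    · have hax : |x| = x := abs_of_nonneg hx
      rw [hax] at hreg hxpos hL1 ⊢
      rcases le_or_gt 0 z with hz | hz
      · have haz : |z| = z := abs_of_nonneg hz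
        rw [haz] at hreg ⊢
        exact core_alg x y z Mx mx My my L₁ L₂ hxpos (by rwa [hax] at hyx) hz
          (by linarith) hMx0 hmx0' hMy0' hmy0' hMy0 hmy0 hL1 hL2 hMR.2
      · have haz : |z| = -z := abs_of_neg hz
        rw [haz] at hreg ⊢
        exact core_alg x (-y) (-z) Mx mx my My L₁ L₂ hxpos
          (by rw [abs_neg]; rwa [hax] at hyx) (by linarith)
          (by rw [abs_neg]; linarith)
          hMx0 hmx0' hmy0' hMy0' (by linarith) (by linarith)
          hL1 (by rw [abs_neg]; linarith) (by linarith [hMR.1])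
    · have hax : |x| = -x := abs_of_neg hx
      rw [hax] at hreg hxpos hL1 ⊢
      rcases le_or_gt 0 z with hz | hz
      · have haz : |z| = z := abs_of_nonneg hz
        rw [haz] at hreg ⊢
        exact core_alg (-x) (-y) z mx Mx my My L₁ L₂ hxpos
          (by rw [abs_neg]; rwa [hax] at hyx) hz
          (by rw [abs_neg]; nlinarith)
          (by linarith) hMx0' hmy0' hMy0' (by linarith) (by linarith)
          (by linarith) (by rw [abs_neg]; linarith) (by linarith [hMR.1])
      · have haz : |z| = -z := abs_of_neg hz
        rw [haz] at hreg ⊢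
        exact core_alg (-x) y (-z) mx Mx My my L₁ L₂ hxpos
          (by rwa [hax] at hyx) (by linarith)
          (by nlinarith)
          (by linarith) hMx0' hMy0' hmy0' hMy0 hmy0
          (by linarith) hL2 (by linarith [hMR.2])

/-- Full algebraic reduction. -/
lemma reduce_alg (x y z Mx mx My my L₁ L₂ : ℝ)
    (hreg2 : |z| ≤ max |x| |y|^2 - |x*y|/2)
    (hMx : max x 0 ≤ Mx) (hmx : max (-x) 0 ≤ mx)
    (hMy : max y 0 ≤ My) (hmy : max (-y) 0 ≤ my)
    (hL1 : 2*(Mx+mx) - |x| ≤ L₁) (hL2 : 2*(My+my) - |y| ≤ L₂)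
    (hM : |2*z + (My-my)/2*x - (Mx-mx)/2*y| ≤ (Mx+mx)/2*L₂ + (My+my)/2*L₁) :
    max |x| |y| + 2*|z|/(max |x| |y|) ≤ L₁ + L₂ := by
  rcases le_total (|y|) (|x|) with hc | hc
  · rw [max_eq_left hc] at hreg2 ⊢
    exact reduce1 x y z Mx mx My my L₁ L₂ hc hreg2 hMx hmx hMy hmy hL1 hL2 hM
  · rw [max_eq_right hc] at hreg2 ⊢
    have hM' : |2*(-z) + (Mx-mx)/2*y - (My-my)/2*x| ≤ (My+my)/2*L₁ + (Mx+mx)/2*L₂ := by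
      have e : 2*(-z) + (Mx-mx)/2*y - (My-my)/2*x
          = -(2*z + (My-my)/2*x - (Mx-mx)/2*y) := by ring
      rw [e, abs_neg]; linarith
    have := reduce1 y x (-z) My my Mx mx L₂ L₁ hc
      (by rw [abs_neg, mul_comm]; exact hreg2) hMy hmy hMx hmx hL2 hL1 hM'
    rw [abs_neg] at this
    linarith

lemma uIcc01 : Set.uIcc (0:ℝ) 1 = Set.Icc 0 1 := Set.uIcc_of_le zero_le_one

lemma ftc01 {f f' : ℝ → ℝ} (hd : ∀ t ∈ Set.Icc (0:ℝ) 1, HasDerivAt f (f' t) t)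
    (hc : ContinuousOn f' (Set.Icc 0 1)) {a b : ℝ}
    (ha : a ∈ Set.Icc (0:ℝ) 1) (hb : b ∈ Set.Icc (0:ℝ) 1) :
    ∫ t in a..b, f' t = f b - f a := by
  have hsub : Set.uIcc a b ⊆ Set.Icc (0:ℝ) 1 := by
    rw [← uIcc01]
    exact Set.uIcc_subset_uIcc (by rwa [uIcc01]) (by rwa [uIcc01])
  exact intervalIntegral.integral_eq_sub_of_hasDerivAt
    (fun t ht => hd t (hsub ht)) ((hc.mono hsub).intervalIntegrable)

/-- total variation lower bound via three-point split -/
lemma tv_bound {X u : ℝ → ℝ} (hd : ∀ t ∈ Set.Icc (0:ℝ) 1, HasDerivAt X (u t) t)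
    (hu : ContinuousOn u (Set.Icc 0 1)) {p q : ℝ}
    (hp : p ∈ Set.Icc (0:ℝ) 1) (hq : q ∈ Set.Icc (0:ℝ) 1) (hpq : p ≤ q) :
    |X p - X 0| + |X q - X p| + |X 1 - X q| ≤ ∫ t in (0:ℝ)..1, |u t| := by
  have habs : ContinuousOn (fun t => |u t|) (Set.Icc 0 1) := hu.abs
  have hint : ∀ {a b : ℝ}, a ∈ Set.Icc (0:ℝ) 1 → b ∈ Set.Icc (0:ℝ) 1 →
      IntervalIntegrable (fun t => |u t|) MeasureTheory.volume a b := by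
    intro a b ha hb
    have hsub : Set.uIcc a b ⊆ Set.Icc (0:ℝ) 1 := by
      rw [← uIcc01]; exact Set.uIcc_subset_uIcc (by rwa [uIcc01]) (by rwa [uIcc01])
    exact (habs.mono hsub).intervalIntegrable
  have h0 : (0:ℝ) ∈ Set.Icc (0:ℝ) 1 := Set.left_mem_Icc.2 zero_le_one
  have h1 : (1:ℝ) ∈ Set.Icc (0:ℝ) 1 := Set.right_mem_Icc.2 zero_le_one
  have e1 : ∫ t in (0:ℝ)..p, |u t| = X p - X 0 → True := fun _ => trivial
  have key : ∀ {a b : ℝ}, a ∈ Set.Icc (0:ℝ) 1 → b ∈ Set.Icc (0:ℝ) 1 → a ≤ b →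
      |X b - X a| ≤ ∫ t in a..b, |u t| := by
    intro a b ha hb hab
    rw [← ftc01 hd hu ha hb]
    exact intervalIntegral.abs_integral_le_integral_abs hab
  have split : ∫ t in (0:ℝ)..1, |u t|
      = (∫ t in (0:ℝ)..p, |u t|) + (∫ t in p..q, |u t|) + (∫ t in q..1, |u t|) := by
    rw [intervalIntegral.integral_add_adjacent_intervals (hint h0 hp) (hint hp hq),
      intervalIntegral.integral_add_adjacent_intervals (hint h0 hq) (hint hq h1)]
  rw [split]
  have b1 := key h0 hp hp.1
  have b2 := key hp hq hpq
  have b3 := key hq h1 hq.2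
  linarith

lemma lower_aux (x₀ y₀ z₀ : ℝ) (X Y Z u v : ℝ → ℝ)
    (hX0 : X 0 = 0) (hY0 : Y 0 = 0) (hZ0 : Z 0 = 0)
    (hX1 : X 1 = x₀) (hY1 : Y 1 = y₀) (hZ1 : Z 1 = z₀)
    (hu : ContinuousOn u (Set.Icc 0 1)) (hv : ContinuousOn v (Set.Icc 0 1))
    (hder : ∀ t ∈ Set.Icc (0:ℝ) 1, HasDerivAt X (u t) t ∧ HasDerivAt Y (v t) t ∧
      HasDerivAt Z ((X t * v t - Y t * u t) / 2) t) :
    ∃ Mx mx My my : ℝ,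
      max x₀ 0 ≤ Mx ∧ max (-x₀) 0 ≤ mx ∧ max y₀ 0 ≤ My ∧ max (-y₀) 0 ≤ my ∧
      2*(Mx+mx) - |x₀| ≤ (∫ t in (0:ℝ)..1, |u t|) ∧
      2*(My+my) - |y₀| ≤ (∫ t in (0:ℝ)..1, |v t|) ∧
      |2*z₀ + (My-my)/2*x₀ - (Mx-mx)/2*y₀| ≤
        (Mx+mx)/2*(∫ t in (0:ℝ)..1, |v t|) + (My+my)/2*(∫ t in (0:ℝ)..1, |u t|) := by
  have h0 : (0:ℝ) ∈ Set.Icc (0:ℝ) 1 := Set.left_mem_Icc.2 zero_le_one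
  have h1 : (1:ℝ) ∈ Set.Icc (0:ℝ) 1 := Set.right_mem_Icc.2 zero_le_one
  have hXd : ∀ t ∈ Set.Icc (0:ℝ) 1, HasDerivAt X (u t) t := fun t ht => (hder t ht).1
  have hYd : ∀ t ∈ Set.Icc (0:ℝ) 1, HasDerivAt Y (v t) t := fun t ht => (hder t ht).2.1
  have hZd : ∀ t ∈ Set.Icc (0:ℝ) 1, HasDerivAt Z ((X t * v t - Y t * u t) / 2) t :=
    fun t ht => (hder t ht).2.2
  have hXc : ContinuousOn X (Set.Icc 0 1) :=
    fun t ht => ((hXd t ht).continuousAt).continuousWithinAt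
  have hYc : ContinuousOn Y (Set.Icc 0 1) :=
    fun t ht => ((hYd t ht).continuousAt).continuousWithinAt
  have hne : (Set.Icc (0:ℝ) 1).Nonempty := Set.nonempty_Icc.2 zero_le_one
  obtain ⟨tMx, htMx, hMaxX⟩ := isCompact_Icc.exists_isMaxOn hne hXc
  obtain ⟨tmx, htmx, hMinX⟩ := isCompact_Icc.exists_isMinOn hne hXc
  obtain ⟨tMy, htMy, hMaxY⟩ := isCompact_Icc.exists_isMaxOn hne hYc
  obtain ⟨tmy, htmy, hMinY⟩ := isCompact_Icc.exists_isMinOn hne hYc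
  refine ⟨X tMx, -(X tmx), Y tMy, -(Y tmy), ?_, ?_, ?_, ?_, ?_, ?_, ?_⟩
  · refine max_le ?_ ?_
    · have := hMaxX h1; simp only [Set.mem_setOf_eq, hX1] at this; linarith
    · have := hMaxX h0; simp only [Set.mem_setOf_eq, hX0] at this; linarith
  · refine max_le ?_ ?_
    · have := hMinX h1; simp only [Set.mem_setOf_eq, hX1] at this; linarith
    · have := hMinX h0; simp only [Set.mem_setOf_eq, hX0] at this; linarith
  · refine max_le ?_ ?_
    · have := hMaxY h1; simp only [Set.mem_setOf_eq, hY1] at this; linarith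
    · have := hMaxY h0; simp only [Set.mem_setOf_eq, hY0] at this; linarith
  · refine max_le ?_ ?_
    · have := hMinY h1; simp only [Set.mem_setOf_eq, hY1] at this; linarith
    · have := hMinY h0; simp only [Set.mem_setOf_eq, hY0] at this; linarith
  · -- TV bound for X
    rcases le_total tmx tMx with hord | hord
    · have := tv_bound hXd hu htmx htMx hord
      rw [hX0, hX1] at this
      have f1 : -(X tmx - 0) ≤ |X tmx - 0| := neg_le_abs _
      have f2 : X tMx - X tmx ≤ |X tMx - X tmx| := le_abs_self _
      have f3 : -(x₀ - X tMx) ≤ |x₀ - X tMx| := neg_le_abs _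
      have f4 : x₀ ≤ |x₀| := le_abs_self x₀
      linarith
    · have := tv_bound hXd hu htMx htmx hord
      rw [hX0, hX1] at this
      have f1 : X tMx - 0 ≤ |X tMx - 0| := le_abs_self _
      have f2 : -(X tmx - X tMx) ≤ |X tmx - X tMx| := neg_le_abs _
      have f3 : x₀ - X tmx ≤ |x₀ - X tmx| := le_abs_self _
      have f4 : -|x₀| ≤ x₀ := neg_abs_le x₀
      linarith
  · rcases le_total tmy tMy with hord | hord
    · have := tv_bound hYd hv htmy htMy hord
      rw [hY0, hY1] at this
      have f1 : -(Y tmy - 0) ≤ |Y tmy - 0| := neg_le_abs _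
      have f2 : Y tMy - Y tmy ≤ |Y tMy - Y tmy| := le_abs_self _
      have f3 : -(y₀ - Y tMy) ≤ |y₀ - Y tMy| := neg_le_abs _
      have f4 : y₀ ≤ |y₀| := le_abs_self y₀
      linarith
    · have := tv_bound hYd hv htMy htmy hord
      rw [hY0, hY1] at this
      have f1 : Y tMy - 0 ≤ |Y tMy - 0| := le_abs_self _
      have f2 : -(Y tmy - Y tMy) ≤ |Y tmy - Y tMy| := neg_le_abs _
      have f3 : y₀ - Y tmy ≤ |y₀ - Y tmy| := le_abs_self _
      have f4 : -|y₀| ≤ y₀ := neg_abs_le y₀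
      linarith
  · -- master inequality
    set px := (X tMx - -(X tmx))/2 with hpx
    set py := (Y tMy - -(Y tmy))/2 with hpy
    have huu : ContinuousOn u (Set.uIcc 0 1) := by rwa [uIcc01]
    have hvv : ContinuousOn v (Set.uIcc 0 1) := by rwa [uIcc01]
    have hXu : ContinuousOn X (Set.uIcc 0 1) := by rwa [uIcc01]
    have hYu : ContinuousOn Y (Set.uIcc 0 1) := by rwa [uIcc01]
    have hg : ContinuousOn (fun t => (X t - px) * v t - (Y t - py) * u t) (Set.uIcc 0 1) :=
      ((hXu.sub continuousOn_const).mul hvv).sub ((hYu.sub continuousOn_const).mul huu)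
    have hintu : ∫ t in (0:ℝ)..1, u t = x₀ := by
      rw [ftc01 hXd hu h0 h1, hX0, hX1]; ring
    have hintv : ∫ t in (0:ℝ)..1, v t = y₀ := by
      rw [ftc01 hYd hv h0 h1, hY0, hY1]; ring
    have hZcont : ContinuousOn (fun t => (X t * v t - Y t * u t) / 2) (Set.Icc 0 1) :=
      ((hXc.mul hv).sub (hYc.mul hu)).div_const 2
    have hintz : ∫ t in (0:ℝ)..1, ((X t * v t - Y t * u t) / 2) = z₀ := by
      rw [ftc01 hZd hZcont h0 h1, hZ0, hZ1]; ring
    have key : ∫ t in (0:ℝ)..1, ((X t - px) * v t - (Y t - py) * u t)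
        = 2*z₀ + py*x₀ - px*y₀ := by
      have expand : ∀ t, (X t - px) * v t - (Y t - py) * u t
          = 2 * ((X t * v t - Y t * u t) / 2) - px * v t + py * u t := by
        intro t; ring
      rw [intervalIntegral.integral_congr (g := fun t =>
        2 * ((X t * v t - Y t * u t) / 2) - px * v t + py * u t) (fun t _ => expand t)]
      have i1 : IntervalIntegrable (fun t => (X t * v t - Y t * u t)/2)
          MeasureTheory.volume 0 1 :=
        (((hXu.mul hvv).sub (hYu.mul huu)).div_const 2).intervalIntegrable
      have i2 : IntervalIntegrable u MeasureTheory.volume 0 1 := huu.intervalIntegrable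
      have i3 : IntervalIntegrable v MeasureTheory.volume 0 1 := hvv.intervalIntegrable
      rw [intervalIntegral.integral_add ((i1.const_mul 2).sub (i3.const_mul px))
          (i2.const_mul py),
        intervalIntegral.integral_sub (i1.const_mul 2) (i3.const_mul px),
        intervalIntegral.integral_const_mul, intervalIntegral.integral_const_mul,
        intervalIntegral.integral_const_mul, hintu, hintv, hintz]
      ring
    have e2 : 2*z₀ + (Y tMy - -(Y tmy))/2*x₀ - (X tMx - -(X tmx))/2*y₀
        = ∫ t in (0:ℝ)..1, ((X t - px) * v t - (Y t - py) * u t) := by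
      rw [key]
    rw [e2]
    have step1 : |∫ t in (0:ℝ)..1, ((X t - px) * v t - (Y t - py) * u t)|
        ≤ ∫ t in (0:ℝ)..1, |(X t - px) * v t - (Y t - py) * u t| :=
      intervalIntegral.abs_integral_le_integral_abs zero_le_one
    have ig : IntervalIntegrable (fun t => |(X t - px) * v t - (Y t - py) * u t|)
        MeasureTheory.volume 0 1 := hg.abs.intervalIntegrable
    have ibv : IntervalIntegrable (fun t => (X tMx + -(X tmx))/2 * |v t|)
        MeasureTheory.volume 0 1 := (hvv.abs.intervalIntegrable).const_mul _
    have ibu : IntervalIntegrable (fun t => (Y tMy + -(Y tmy))/2 * |u t|)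
        MeasureTheory.volume 0 1 := (huu.abs.intervalIntegrable).const_mul _
    have step2 : ∫ t in (0:ℝ)..1, |(X t - px) * v t - (Y t - py) * u t|
        ≤ ∫ t in (0:ℝ)..1, ((X tMx + -(X tmx))/2 * |v t| + (Y tMy + -(Y tmy))/2 * |u t|) := by
      apply intervalIntegral.integral_mono_on zero_le_one ig (ibv.add ibu)
      intro t ht
      have hXt1 := hMaxX ht; have hXt2 := hMinX ht
      have hYt1 := hMaxY ht; have hYt2 := hMinY ht
      simp only [Set.mem_setOf_eq] at hXt1 hXt2 hYt1 hYt2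
      have bX : |X t - px| ≤ (X tMx + -(X tmx))/2 := by
        rw [abs_le, hpx]; constructor <;> [linarith; linarith]
      have bY : |Y t - py| ≤ (Y tMy + -(Y tmy))/2 := by
        rw [abs_le, hpy]; constructor <;> [linarith; linarith]
      calc |(X t - px) * v t - (Y t - py) * u t|
          ≤ |(X t - px) * v t| + |(Y t - py) * u t| := abs_sub _ _
        _ = |X t - px| * |v t| + |Y t - py| * |u t| := by rw [abs_mul, abs_mul]
        _ ≤ (X tMx + -(X tmx))/2 * |v t| + (Y tMy + -(Y tmy))/2 * |u t| := by
            refine add_le_add ?_ ?_ <;>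
              exact mul_le_mul_of_nonneg_right (by assumption) (abs_nonneg _)
    have step3 : ∫ t in (0:ℝ)..1, ((X tMx + -(X tmx))/2 * |v t| + (Y tMy + -(Y tmy))/2 * |u t|)
        = (X tMx + -(X tmx))/2 * (∫ t in (0:ℝ)..1, |v t|)
          + (Y tMy + -(Y tmy))/2 * (∫ t in (0:ℝ)..1, |u t|) := by
      rw [intervalIntegral.integral_add ibv ibu, intervalIntegral.integral_const_mul,
        intervalIntegral.integral_const_mul]
    linarith [step1, step2, step3.le, step3.ge]
  done

noncomputable def bump (s : ℝ) : ℝ := 6 * max (s * (1 - s)) 0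
noncomputable def Bump (s : ℝ) : ℝ := if s ≤ 0 then 0 else if 1 ≤ s then 1 else s^2*(3 - 2*s)

lemma bump_cont : Continuous bump := by
  unfold bump; fun_prop

lemma bump_nonneg (s : ℝ) : 0 ≤ bump s :=
  mul_nonneg (by norm_num) (le_max_right _ _)

lemma bump_of_nonpos {s : ℝ} (h : s ≤ 0) : bump s = 0 := by
  unfold bump
  rw [max_eq_right (mul_nonpos_iff.2 (Or.inr ⟨h, by linarith⟩))]
  ring

lemma bump_of_ge {s : ℝ} (h : 1 ≤ s) : bump s = 0 := by
  unfold bump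
  rw [max_eq_right (mul_nonpos_iff.2 (Or.inl ⟨by linarith, by linarith⟩))]
  ring

lemma bump_of_mem {s : ℝ} (h0 : 0 ≤ s) (h1 : s ≤ 1) : bump s = 6*(s*(1-s)) := by
  unfold bump
  rw [max_eq_left (mul_nonneg h0 (by linarith))]

lemma Bump_of_nonpos {s : ℝ} (h : s ≤ 0) : Bump s = 0 := if_pos h

lemma Bump_of_ge {s : ℝ} (h : 1 ≤ s) : Bump s = 1 := by
  unfold Bump
  rw [if_neg (by intro h'; linarith), if_pos h]

lemma Bump_of_mem {s : ℝ} (h0 : 0 ≤ s) (h1 : s ≤ 1) : Bump s = s^2*(3-2*s) := by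
  unfold Bump
  rcases eq_or_lt_of_le h0 with h | h
  · rw [if_pos h.symm.le, ← h]; ring
  · rcases eq_or_lt_of_le h1 with h' | h'
    · rw [if_neg (by intro h''; linarith), h']
      norm_num
    · rw [if_neg (by intro h''; linarith), if_neg (by intro h''; linarith)]

lemma cubic_deriv (s : ℝ) : HasDerivAt (fun r : ℝ => r^2*(3-2*r)) (6*(s*(1-s))) s := by
  have h := ((hasDerivAt_pow 2 s).mul (((hasDerivAt_id s).const_mul 2).const_sub 3))
  convert h using 1 <;> try rfl
  simp only [id_eq]
  push_cast; ring

lemma Bump_eqOn_Icc {r : ℝ} (h : r ∈ Set.Icc (0:ℝ) 1) : Bump r = r^2*(3-2*r) :=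
  Bump_of_mem h.1 h.2

lemma Bump_hasDeriv (s : ℝ) : HasDerivAt Bump (bump s) s := by
  rcases lt_trichotomy s 0 with hs | hs | hs
  · rw [bump_of_nonpos hs.le]
    have : Bump =ᶠ[nhds s] (fun _ => 0) := by
      filter_upwards [Iio_mem_nhds hs] with r hr
      exact Bump_of_nonpos (le_of_lt hr)
    exact (hasDerivAt_const s 0).congr_of_eventuallyEq this
  · subst hs
    rw [bump_of_nonpos le_rfl]
    have h1 : HasDerivWithinAt Bump 0 (Set.Iic 0) 0 := by
      refine (hasDerivWithinAt_const (0:ℝ) (Set.Iic (0:ℝ)) (0:ℝ)).congr (fun r hr => Bump_of_nonpos hr) ?_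
      exact Bump_of_nonpos le_rfl
    have h2 : HasDerivWithinAt Bump 0 (Set.Icc 0 1) 0 := by
      have hc : HasDerivWithinAt (fun r : ℝ => r^2*(3-2*r)) 0 (Set.Icc 0 1) 0 := by
        have := cubic_deriv 0
        simpa using this.hasDerivWithinAt
      refine hc.congr (fun r hr => Bump_eqOn_Icc hr) ?_
      simpa using Bump_eqOn_Icc (Set.left_mem_Icc.2 zero_le_one)
    have hu := h1.union h2
    rw [Set.Iic_union_Icc_eq_Iic zero_le_one] at hu
    exact hu.hasDerivAt (Iic_mem_nhds zero_lt_one)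
  · rcases lt_trichotomy s 1 with hs1 | hs1 | hs1
    · rw [bump_of_mem hs.le hs1.le]
      have : Bump =ᶠ[nhds s] (fun r => r^2*(3-2*r)) := by
        filter_upwards [Ioo_mem_nhds hs hs1] with r hr
        exact Bump_of_mem hr.1.le hr.2.le
      exact (cubic_deriv s).congr_of_eventuallyEq this
    · subst hs1
      rw [bump_of_ge le_rfl]
      have h2 : HasDerivWithinAt Bump 0 (Set.Icc 0 1) 1 := by
        have hc : HasDerivWithinAt (fun r : ℝ => r^2*(3-2*r)) 0 (Set.Icc 0 1) 1 := by
          have := cubic_deriv 1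
          simpa using this.hasDerivWithinAt
        refine hc.congr (fun r hr => Bump_eqOn_Icc hr) ?_
        have := Bump_eqOn_Icc (Set.right_mem_Icc.2 zero_le_one)
        simpa using this
      have h3 : HasDerivWithinAt Bump 0 (Set.Ici 1) 1 := by
        refine (hasDerivWithinAt_const (1:ℝ) (Set.Ici (1:ℝ)) (1:ℝ)).congr (fun r hr => Bump_of_ge hr) ?_
        exact Bump_of_ge le_rfl
      have hu := h2.union h3
      rw [Set.Icc_union_Ici_eq_Ici zero_le_one] at hu
      exact hu.hasDerivAt (Ici_mem_nhds zero_lt_one)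
    · rw [bump_of_ge hs1.le]
      have : Bump =ᶠ[nhds s] (fun _ => 1) := by
        filter_upwards [Ioi_mem_nhds hs1] with r hr
        exact Bump_of_ge (le_of_lt hr)
      exact (hasDerivAt_const s 1).congr_of_eventuallyEq this

/-- scaled antiderivative fact -/
lemma scaled_deriv (c k : ℝ) (t : ℝ) :
    HasDerivAt (fun t => k * Bump (3*t - c)) (k * (3 * bump (3*t - c))) t := by
  have h1 : HasDerivAt (fun t : ℝ => 3*t - c) 3 t := by
    simpa using ((hasDerivAt_id t).const_mul 3).sub_const c
  have h2 := (Bump_hasDeriv (3*t - c)).comp t h1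
  have := h2.const_mul k
  convert this using 1 <;> try rfl
  ring

lemma scaled_integral (c : ℝ) : ∫ t in (0:ℝ)..1, 3 * bump (3*t - c) = Bump (3 - c) - Bump (-c) := by
  have h : ∀ t ∈ Set.uIcc (0:ℝ) 1, HasDerivAt (fun t => Bump (3*t - c)) (3 * bump (3*t-c)) t := by
    intro t _
    have := scaled_deriv c 1 t
    simpa using this
  have hcont : ContinuousOn (fun t => 3 * bump (3*t - c)) (Set.uIcc 0 1) := by
    apply Continuous.continuousOn
    have hb : Continuous (fun t : ℝ => bump (3*t - c)) :=
      bump_cont.comp (by fun_prop : Continuous (fun t : ℝ => 3*t - c))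
    exact continuous_const.mul hb
  have := intervalIntegral.integral_eq_sub_of_hasDerivAt h hcont.intervalIntegrable
  simpa using this

lemma AB1 (r : ℝ) : bump r * Bump (r - 1) = 0 := by
  rcases le_total r 1 with h | h
  · rw [Bump_of_nonpos (by linarith)]; ring
  · rw [bump_of_ge h]; ring

lemma AB2 (r : ℝ) : bump r * Bump (r + 1) = bump r := by
  rcases le_total 0 r with h | h
  · rw [Bump_of_ge (by linarith)]; ring
  · rw [bump_of_nonpos h]; ring

lemma AB3 (r : ℝ) : bump r * bump (r - 2) = 0 := by
  rcases le_total r 1 with h | h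
  · rw [bump_of_nonpos (by linarith : r - 2 ≤ 0)]; ring
  · rw [bump_of_ge h]; ring

lemma length_mem (p h₁ h₂ : ℝ) :
    ∃ x y z u v : ℝ → ℝ, x 0 = 0 ∧ y 0 = 0 ∧ z 0 = 0 ∧
    x 1 = p ∧ y 1 = h₁ + h₂ ∧ z 1 = (p*h₂ - p*h₁)/2 ∧
    ContinuousOn u (Set.Icc 0 1) ∧ ContinuousOn v (Set.Icc 0 1) ∧
    (∀ t ∈ Set.Icc (0:ℝ) 1, HasDerivAt x (u t) t ∧ HasDerivAt y (v t) t ∧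
        HasDerivAt z ((x t * v t - y t * u t) / 2) t) ∧
    (|p| + (|h₁| + |h₂|)) = ∫ t in (0:ℝ)..1, (|u t| + |v t|) := by
  refine ⟨fun t => p * Bump (3*t-1),
    fun t => h₁ * Bump (3*t-0) + h₂ * Bump (3*t-2),
    fun t => (p*h₂/2) * Bump (3*t-2) + (-(p*h₁/2)) * Bump (3*t-1),
    fun t => p * (3 * bump (3*t-1)),
    fun t => h₁ * (3 * bump (3*t-0)) + h₂ * (3 * bump (3*t-2)),
    ?_, ?_, ?_, ?_, ?_, ?_, ?_, ?_, ?_, ?_⟩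
  · show p * Bump (3*(0:ℝ)-1) = 0
    rw [show (3*(0:ℝ)-1) = (-1:ℝ) by norm_num, Bump_of_nonpos (by norm_num)]; ring
  · show h₁ * Bump (3*(0:ℝ)-0) + h₂ * Bump (3*(0:ℝ)-2) = 0
    rw [show (3*(0:ℝ)-0) = (0:ℝ) by norm_num, show (3*(0:ℝ)-2) = (-2:ℝ) by norm_num,
      Bump_of_nonpos le_rfl, Bump_of_nonpos (by norm_num)]; ring
  · show p*h₂/2 * Bump (3*(0:ℝ)-2) + -(p*h₁/2) * Bump (3*(0:ℝ)-1) = 0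
    rw [show (3*(0:ℝ)-1) = (-1:ℝ) by norm_num, show (3*(0:ℝ)-2) = (-2:ℝ) by norm_num,
      Bump_of_nonpos (by norm_num), Bump_of_nonpos (by norm_num)]; ring
  · show p * Bump (3*(1:ℝ)-1) = p
    rw [show (3*(1:ℝ)-1) = (2:ℝ) by norm_num, Bump_of_ge (by norm_num)]; ring
  · show h₁ * Bump (3*(1:ℝ)-0) + h₂ * Bump (3*(1:ℝ)-2) = h₁ + h₂
    rw [show (3*(1:ℝ)-0) = (3:ℝ) by norm_num, show (3*(1:ℝ)-2) = (1:ℝ) by norm_num,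
      Bump_of_ge (by norm_num), Bump_of_ge (by norm_num)]; ring
  · show p*h₂/2 * Bump (3*(1:ℝ)-2) + -(p*h₁/2) * Bump (3*(1:ℝ)-1) = (p*h₂ - p*h₁)/2
    rw [show (3*(1:ℝ)-1) = (2:ℝ) by norm_num, show (3*(1:ℝ)-2) = (1:ℝ) by norm_num,
      Bump_of_ge (by norm_num), Bump_of_ge (by norm_num)]; ring
  · apply Continuous.continuousOn
    exact continuous_const.mul (continuous_const.mul
      (bump_cont.comp (by fun_prop : Continuous (fun t : ℝ => 3*t-1))))
  · apply Continuous.continuousOn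
    exact (continuous_const.mul (continuous_const.mul (bump_cont.comp
        (by fun_prop : Continuous (fun t : ℝ => 3*t-0))))).add
      (continuous_const.mul (continuous_const.mul (bump_cont.comp
        (by fun_prop : Continuous (fun t : ℝ => 3*t-2)))))
  · intro t _
    refine ⟨scaled_deriv 1 p t, (scaled_deriv 0 h₁ t).add (scaled_deriv 2 h₂ t), ?_⟩
    have hzd := (scaled_deriv 2 (p*h₂/2) t).add (scaled_deriv 1 (-(p*h₁/2)) t)
    convert hzd using 1 <;> try rfl
    have e1 := AB1 (3*t-0); rw [show (3*t-0) - 1 = 3*t-1 by ring] at e1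
    have e2 := AB2 (3*t-2); rw [show (3*t-2) + 1 = 3*t-1 by ring] at e2
    have e3 := AB2 (3*t-1); rw [show (3*t-1) + 1 = 3*t-0 by ring] at e3
    have e4 := AB1 (3*t-1); rw [show (3*t-1) - 1 = 3*t-2 by ring] at e4
    linear_combination (3*p*h₁/2) * e1 + (3*p*h₂/2) * e2 - (3*p*h₁/2) * e3 - (3*p*h₂/2) * e4
  · -- length
    have hpt : ∀ t : ℝ, |p * (3 * bump (3*t-1))| + |h₁ * (3 * bump (3*t-0)) + h₂ * (3 * bump (3*t-2))|
        = |p| * (3 * bump (3*t-1)) + (|h₁| * (3 * bump (3*t-0)) + |h₂| * (3 * bump (3*t-2))) := by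
      intro t
      have habs1 : |p * (3 * bump (3*t-1))| = |p| * (3 * bump (3*t-1)) := by
        rw [abs_mul, abs_of_nonneg (mul_nonneg (by norm_num) (bump_nonneg _))]
      have e := AB3 (3*t-0); rw [show (3*t-0) - 2 = 3*t-2 by ring] at e
      rw [habs1]
      rcases mul_eq_zero.1 e with h | h
      · rw [h, show h₁ * (3 * (0:ℝ)) + h₂ * (3 * bump (3*t-2)) = h₂ * (3 * bump (3*t-2)) by ring,
          abs_mul, abs_of_nonneg (mul_nonneg (by norm_num : (0:ℝ) ≤ 3) (bump_nonneg (3*t-2)))]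
        ring
      · rw [h, show h₁ * (3 * bump (3*t-0)) + h₂ * (3 * (0:ℝ)) = h₁ * (3 * bump (3*t-0)) by ring,
          abs_mul, abs_of_nonneg (mul_nonneg (by norm_num : (0:ℝ) ≤ 3) (bump_nonneg (3*t-0)))]
        ring
    rw [intervalIntegral.integral_congr (g := fun t =>
        |p| * (3 * bump (3*t-1)) + (|h₁| * (3 * bump (3*t-0)) + |h₂| * (3 * bump (3*t-2))))
      (fun t _ => hpt t)]
    have ic : ∀ c k : ℝ, IntervalIntegrable (fun t => k * (3 * bump (3*t-c)))
        MeasureTheory.volume 0 1 := by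
      intro c k
      apply Continuous.intervalIntegrable
      exact continuous_const.mul (continuous_const.mul
        (bump_cont.comp (by fun_prop : Continuous (fun t : ℝ => 3*t-c))))
    have iint : ∀ c k : ℝ, ∫ t in (0:ℝ)..1, k * (3 * bump (3*t-c))
        = k * (Bump (3-c) - Bump (-c)) := by
      intro c k
      rw [intervalIntegral.integral_const_mul, scaled_integral]
    rw [intervalIntegral.integral_add (ic 1 (|p|)) ((ic 0 (|h₁|)).add (ic 2 (|h₂|))),
      intervalIntegral.integral_add (ic 0 (|h₁|)) (ic 2 (|h₂|)),
      iint, iint, iint,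
      show (3:ℝ)-1 = 2 by norm_num, show (3:ℝ)-0 = 3 by norm_num, show (3:ℝ)-2 = 1 by norm_num,
      show (-1:ℝ) = -1 by norm_num,
      Bump_of_ge (by norm_num : (1:ℝ) ≤ 2), Bump_of_ge (by norm_num : (1:ℝ) ≤ 3),
      Bump_of_ge (le_refl (1:ℝ)),
      Bump_of_nonpos (by norm_num : (-1:ℝ) ≤ 0), Bump_of_nonpos (by norm_num : (-0:ℝ) ≤ 0),
      Bump_of_nonpos (by norm_num : (-2:ℝ) ≤ 0)]
    ring

lemma length_mem' (q g₁ g₂ : ℝ) :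
    ∃ x y z u v : ℝ → ℝ, x 0 = 0 ∧ y 0 = 0 ∧ z 0 = 0 ∧
    x 1 = g₁ + g₂ ∧ y 1 = q ∧ z 1 = (q*g₁ - q*g₂)/2 ∧
    ContinuousOn u (Set.Icc 0 1) ∧ ContinuousOn v (Set.Icc 0 1) ∧
    (∀ t ∈ Set.Icc (0:ℝ) 1, HasDerivAt x (u t) t ∧ HasDerivAt y (v t) t ∧
        HasDerivAt z ((x t * v t - y t * u t) / 2) t) ∧
    (|q| + (|g₁| + |g₂|)) = ∫ t in (0:ℝ)..1, (|u t| + |v t|) := by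
  obtain ⟨X, Y, Z, u, v, c1, c2, c3, c4, c5, c6, c7, c8, c9, c10⟩ := length_mem q g₁ g₂
  refine ⟨Y, X, fun t => -(Z t), v, u, c2, c1, by show -(Z 0) = 0; rw [c3]; ring, c5, c4,
    by show -(Z 1) = (q*g₁ - q*g₂)/2; rw [c6]; ring, c8, c7, ?_, ?_⟩
  · intro t ht
    obtain ⟨d1, d2, d3⟩ := c9 t ht
    refine ⟨d2, d1, ?_⟩
    have := d3.neg
    convert this using 1 <;> try rfl
    ring
  · rw [c10]
    apply intervalIntegral.integral_congr
    intro t _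
    exact add_comm _ _

lemma habs_helper (A B : ℝ) (h : |A| ≤ |B|) : |A - B| + |A + B| = 2 * |B| := by
  have h1 := abs_le.1 h
  rcases le_total 0 B with hB | hB
  · rw [abs_of_nonneg hB] at *
    rw [abs_of_nonpos (by linarith), abs_of_nonneg (by linarith)]
    ring
  · rw [abs_of_nonpos hB] at *
    rw [abs_of_nonneg (by linarith), abs_of_nonpos (by linarith)]
    ring

/-- In the region `|xy|/2 ≤ |z| ≤ max{|x|,|y|}² − |xy|/2`, the subFinsler
distance from the identity in the Heisenberg group is
`max{|x|,|y|} + 2|z|/max{|x|,|y|}`. -/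
theorem d3_eq_of_three_sided (x y z : ℝ)
    (h1 : |x * y| / 2 ≤ |z|) (h2 : |z| ≤ max |x| |y| ^ 2 - |x * y| / 2) :
    d3 (x, y, z) = max |x| |y| + 2 * |z| / max |x| |y| := by
  have hmem : (max |x| |y| + 2 * |z| / max |x| |y|) ∈ {L : ℝ | ∃ X Y Z u v : ℝ → ℝ,
      X 0 = 0 ∧ Y 0 = 0 ∧ Z 0 = 0 ∧
      X 1 = x ∧ Y 1 = y ∧ Z 1 = z ∧
      ContinuousOn u (Set.Icc 0 1) ∧ ContinuousOn v (Set.Icc 0 1) ∧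
      (∀ t ∈ Set.Icc (0:ℝ) 1, HasDerivAt X (u t) t ∧ HasDerivAt Y (v t) t ∧
          HasDerivAt Z ((X t * v t - Y t * u t) / 2) t) ∧
      L = ∫ t in (0:ℝ)..1, (|u t| + |v t|)} := by
    rcases le_total (|y|) (|x|) with hc | hc
    · rcases eq_or_ne x 0 with hx0 | hx0
      · -- x = 0 hence y = 0 and z = 0
        have hy0 : y = 0 := by
          have : |y| ≤ 0 := by rw [hx0] at hc; simpa using hc
          exact abs_eq_zero.1 (le_antisymm this (abs_nonneg y))
        have hz0 : z = 0 := by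
          apply abs_eq_zero.1
          apply le_antisymm ?_ (abs_nonneg z)
          have : max |x| |y| = 0 := by rw [hx0, hy0]; simp
          have h2' := h2
          rw [this, hx0] at h2'
          simpa using h2'
        obtain ⟨X, Y, Z, u, v, c1, c2, c3, c4, c5, c6, c7, c8, c9, c10⟩ := length_mem 0 0 0
        refine ⟨X, Y, Z, u, v, c1, c2, c3, by rw [c4, hx0], by rw [c5, hy0]; ring,
          by rw [c6, hz0]; ring, c7, c8, c9, ?_⟩
        rw [← c10, hx0, hy0, hz0]
        simp
      · have hax : 0 < |x| := abs_pos.2 hx0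
        obtain ⟨X, Y, Z, u, v, c1, c2, c3, c4, c5, c6, c7, c8, c9, c10⟩ :=
          length_mem x (y/2 - z/x) (y/2 + z/x)
        refine ⟨X, Y, Z, u, v, c1, c2, c3, c4, by rw [c5]; ring, by rw [c6]; field_simp; ring,
          c7, c8, c9, ?_⟩
        rw [← c10, max_eq_left hc]
        have hB : |y/2| ≤ |z/x| := by
          have h1' : |x| * |y| / 2 ≤ |z| := by rw [← abs_mul]; exact h1
          rw [abs_div, abs_div, show |(2:ℝ)| = 2 by norm_num,
            div_le_div_iff₀ (by norm_num) hax]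
          nlinarith [h1', abs_nonneg z]
        have hh := habs_helper (y/2) (z/x) hB
        rw [abs_div] at hh
        have : |y/2 - z/x| + |y/2 + z/x| = 2 * |z| / |x| := by
          rw [hh]; ring
        rw [this]
    · rcases eq_or_ne y 0 with hy0 | hy0
      · have hx0 : x = 0 := by
          have : |x| ≤ 0 := by rw [hy0] at hc; simpa using hc
          exact abs_eq_zero.1 (le_antisymm this (abs_nonneg x))
        have hz0 : z = 0 := by
          apply abs_eq_zero.1
          apply le_antisymm ?_ (abs_nonneg z)
          have : max |x| |y| = 0 := by rw [hx0, hy0]; simp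
          have h2' := h2
          rw [this, hx0] at h2'
          simpa using h2'
        obtain ⟨X, Y, Z, u, v, c1, c2, c3, c4, c5, c6, c7, c8, c9, c10⟩ := length_mem 0 0 0
        refine ⟨X, Y, Z, u, v, c1, c2, c3, by rw [c4, hx0], by rw [c5, hy0]; ring,
          by rw [c6, hz0]; ring, c7, c8, c9, ?_⟩
        rw [← c10, hx0, hy0, hz0]
        simp
      · have hay : 0 < |y| := abs_pos.2 hy0
        obtain ⟨X, Y, Z, u, v, c1, c2, c3, c4, c5, c6, c7, c8, c9, c10⟩ :=
          length_mem' y (x/2 + z/y) (x/2 - z/y)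
        refine ⟨X, Y, Z, u, v, c1, c2, c3, by rw [c4]; ring, c5, by rw [c6]; field_simp; ring,
          c7, c8, c9, ?_⟩
        rw [← c10, max_eq_right hc]
        have hB : |x/2| ≤ |z/y| := by
          have h1' : |x| * |y| / 2 ≤ |z| := by rw [← abs_mul]; exact h1
          rw [abs_div, abs_div, show |(2:ℝ)| = 2 by norm_num,
            div_le_div_iff₀ (by norm_num) hay]
          nlinarith [h1', abs_nonneg z]
        have hh := habs_helper (x/2) (z/y) hB
        rw [abs_div] at hh
        have e1 : |x/2 + z/y| = |x/2 - -(z/y)| := by ring_nf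
        have e2 : |x/2 - z/y| = |x/2 + -(z/y)| := by ring_nf
        have hB' : |x/2| ≤ |-(z/y)| := by rwa [abs_neg]
        have hh' := habs_helper (x/2) (-(z/y)) hB'
        rw [abs_neg, abs_div] at hh'
        have : |x/2 + z/y| + |x/2 - z/y| = 2 * |z| / |y| := by
          rw [e1, e2]
          rw [hh']; ring
        rw [this]
  have hlb : ∀ L ∈ {L : ℝ | ∃ X Y Z u v : ℝ → ℝ,
      X 0 = 0 ∧ Y 0 = 0 ∧ Z 0 = 0 ∧
      X 1 = x ∧ Y 1 = y ∧ Z 1 = z ∧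
      ContinuousOn u (Set.Icc 0 1) ∧ ContinuousOn v (Set.Icc 0 1) ∧
      (∀ t ∈ Set.Icc (0:ℝ) 1, HasDerivAt X (u t) t ∧ HasDerivAt Y (v t) t ∧
          HasDerivAt Z ((X t * v t - Y t * u t) / 2) t) ∧
      L = ∫ t in (0:ℝ)..1, (|u t| + |v t|)},
      max |x| |y| + 2 * |z| / max |x| |y| ≤ L := by
    rintro L ⟨X, Y, Z, u, v, c1, c2, c3, c4, c5, c6, c7, c8, c9, c10⟩
    obtain ⟨Mx, mx, My, my, d1, d2, d3, d4, d5, d6, d7⟩ :=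
      lower_aux x y z X Y Z u v c1 c2 c3 c4 c5 c6 c7 c8 c9
    have huI : ContinuousOn (fun t => |u t|) (Set.uIcc 0 1) := by rw [uIcc01]; exact c7.abs
    have hvI : ContinuousOn (fun t => |v t|) (Set.uIcc 0 1) := by rw [uIcc01]; exact c8.abs
    have hsplit : ∫ t in (0:ℝ)..1, (|u t| + |v t|)
        = (∫ t in (0:ℝ)..1, |u t|) + (∫ t in (0:ℝ)..1, |v t|) :=
      intervalIntegral.integral_add huI.intervalIntegrable hvI.intervalIntegrable
    have := reduce_alg x y z Mx mx My my (∫ t in (0:ℝ)..1, |u t|) (∫ t in (0:ℝ)..1, |v t|)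
      h2 d1 d2 d3 d4 d5 d6 d7
    rw [c10, hsplit]
    linarith
  have hbdd : BddBelow {L : ℝ | ∃ X Y Z u v : ℝ → ℝ,
      X 0 = 0 ∧ Y 0 = 0 ∧ Z 0 = 0 ∧
      X 1 = x ∧ Y 1 = y ∧ Z 1 = z ∧
      ContinuousOn u (Set.Icc 0 1) ∧ ContinuousOn v (Set.Icc 0 1) ∧
      (∀ t ∈ Set.Icc (0:ℝ) 1, HasDerivAt X (u t) t ∧ HasDerivAt Y (v t) t ∧
          HasDerivAt Z ((X t * v t - Y t * u t) / 2) t) ∧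
      L = ∫ t in (0:ℝ)..1, (|u t| + |v t|)} :=
    ⟨max |x| |y| + 2 * |z| / max |x| |y|, fun L hL => hlb L hL⟩
  exact le_antisymm (csInf_le hbdd hmem) (le_csInf ⟨_, hmem⟩ hlb)
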